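/- For every irreducible ℂ[S_n]-module V, the restriction of V to the subgroup S_{n−1} ⊆ S_n (permutations fixing n) is multiplicity-free: it decomposes as a direct sum of pairwise non-isomorphic irreducible ℂ[S_{n−1}]-modules, i.e. every irreducible ℂ[S_{n−1}]-module occurs in the restriction with multiplicity at most one. -/

import Mathlib

/-- A representation `ρ` of `G` on `V` is irreducible if `V ≠ 0` and the only
`G`-invariant subspaces of `V` are `0` and `V`. -/
def RepIsIrreducible {k : Type*} [Field k] {G : Type*} [Group G]
    {V : Type*} [AddCommGroup V] [Module k V] (ρ : Representation k G V) : Prop :=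
  (∃ v : V, v ≠ 0) ∧
    ∀ p : Submodule k V, (∀ (g : G) (v : V), v ∈ p → ρ g v ∈ p) → p = ⊥ ∨ p = ⊤

/-- The subgroup `S_n ⊆ S_{n+1}` of permutations fixing the last point. -/
def pointStabilizer (n : ℕ) : Subgroup (Equiv.Perm (Fin (n + 1))) :=
  MulAction.stabilizer (Equiv.Perm (Fin (n + 1))) (Fin.last n)

/-- The space of `H`-equivariant linear maps between a representation `τ` of a subgroup
`H ≤ G` and (the restriction to `H` of) a representation `ρ` of `G`. -/
def equivariantHoms {G : Type*} [Group G] (H : Subgroup G)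
    {V : Type*} [AddCommGroup V] [Module ℂ V] (ρ : Representation ℂ G V)
    {W : Type*} [AddCommGroup W] [Module ℂ W] (τ : Representation ℂ H W) :
    Submodule ℂ (W →ₗ[ℂ] V) where
  carrier := {f | ∀ (σ : H) (w : W), f (τ σ w) = ρ (σ : G) (f w)}
  add_mem' := by intro f g hf hg σ w; simp [hf σ w, hg σ w]
  zero_mem' := by intro σ w; simp
  smul_mem' := by intro c f hf σ w; simp [hf σ w]

lemma mem_equivariantHoms {G : Type*} [Group G] {H : Subgroup G}
    {V : Type*} [AddCommGroup V] [Module ℂ V] {ρ : Representation ℂ G V}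
    {W : Type*} [AddCommGroup W] [Module ℂ W] {τ : Representation ℂ H W}
    {f : W →ₗ[ℂ] V} :
    f ∈ equivariantHoms H ρ τ ↔ ∀ (σ : H) (w : W), f (τ σ w) = ρ (σ : G) (f w) :=
  Iff.rfl

open Equiv

namespace MF


lemma zpow_neg_apply_eq {α : Type*} (σ : Equiv.Perm α) (y : α) {i j : ℤ}
    (h : (σ ^ i) y = (σ ^ j) y) : (σ ^ (-i)) y = (σ ^ (-j)) y := by
  have h1 : (σ ^ (i - j)) y = y := by
    have h' : (σ ^ (-j)) ((σ ^ i) y) = (σ ^ (-j)) ((σ ^ j) y) := congrArg _ h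
    rw [← Equiv.Perm.mul_apply, ← Equiv.Perm.mul_apply, ← zpow_add, ← zpow_add] at h'
    have e1 : -j + i = i - j := by ring
    have e2 : -j + j = 0 := by ring
    rw [e1, e2, zpow_zero] at h'
    simpa using h'
  have h2 : (σ ^ (j - i)) y = y := by
    calc (σ ^ (j - i)) y = (σ ^ (j - i)) ((σ ^ (i - j)) y) := by rw [h1]
    _ = (σ ^ ((j - i) + (i - j))) y := by rw [← Equiv.Perm.mul_apply, ← zpow_add]
    _ = y := by
        have : (j - i) + (i - j) = 0 := by ring
        rw [this, zpow_zero]; rfl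
  calc (σ ^ (-i)) y = (σ ^ (-j + (j - i))) y := by
        have : -j + (j - i) = -i := by ring
        rw [this]
  _ = (σ ^ (-j)) ((σ ^ (j - i)) y) := by rw [← Equiv.Perm.mul_apply, ← zpow_add]
  _ = (σ ^ (-j)) y := by rw [h2]

variable {α : Type*} [Fintype α] [LinearOrder α]

open Classical in
/-- Base point of the cycle of `x`: equal to `a` on the cycle of `a`. -/
noncomputable def bp (a : α) (σ : Equiv.Perm α) (x : α) : α :=
  if σ.SameCycle a x then a
  else (Finset.univ.filter (fun z => σ.SameCycle x z)).min'
    ⟨x, Finset.mem_filter.mpr ⟨Finset.mem_univ x, Equiv.Perm.SameCycle.refl σ x⟩⟩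

lemma bp_sameCycle (a : α) (σ : Equiv.Perm α) (x : α) : σ.SameCycle x (bp a σ x) := by
  classical
  rw [bp]
  split_ifs with h
  · exact h.symm
  · have := Finset.min'_mem (Finset.univ.filter (fun z => σ.SameCycle x z))
      ⟨x, Finset.mem_filter.mpr ⟨Finset.mem_univ x, Equiv.Perm.SameCycle.refl σ x⟩⟩
    exact (Finset.mem_filter.mp this).2

lemma bp_congr (a : α) (σ : Equiv.Perm α) {x y : α} (hxy : σ.SameCycle x y) :
    bp a σ x = bp a σ y := by
  classical
  rw [bp, bp]
  by_cases h : σ.SameCycle a x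
  · rw [if_pos h, if_pos (h.trans hxy)]
  · have h' : ¬ σ.SameCycle a y := fun hy => h (hy.trans hxy.symm)
    rw [if_neg h, if_neg h']
    congr 1
    apply Finset.filter_congr
    intro z _
    constructor
    · exact fun hz => hxy.symm.trans hz
    · exact fun hz => hxy.trans hz

lemma bp_a (a : α) (σ : Equiv.Perm α) : bp a σ a = a := by
  classical
  rw [bp, if_pos (Equiv.Perm.SameCycle.refl σ a)]

/-- exponent: σ ^ (ex a σ x) (bp a σ x) = x -/
noncomputable def ex (a : α) (σ : Equiv.Perm α) (x : α) : ℤ :=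
  ((bp_sameCycle a σ x).symm).choose

lemma ex_spec (a : α) (σ : Equiv.Perm α) (x : α) :
    (σ ^ (ex a σ x)) (bp a σ x) = x :=
  ((bp_sameCycle a σ x).symm).choose_spec

/-- the cycle-reversal map -/
noncomputable def tm (a : α) (σ : Equiv.Perm α) (x : α) : α :=
  (σ ^ (-(ex a σ x))) (bp a σ x)

lemma tm_key (a : α) (σ : Equiv.Perm α) (x : α) (i : ℤ) :
    tm a σ ((σ ^ i) x) = (σ ^ (-i)) (tm a σ x) := by
  have hbx : bp a σ ((σ ^ i) x) = bp a σ x := (bp_congr a σ ⟨i, rfl⟩).symm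
  have h1 : (σ ^ (ex a σ ((σ ^ i) x))) (bp a σ x) = (σ ^ (i + ex a σ x)) (bp a σ x) := by
    have l := ex_spec a σ ((σ ^ i) x)
    rw [hbx] at l
    rw [l, zpow_add, Equiv.Perm.mul_apply, ex_spec a σ x]
  have h2 := zpow_neg_apply_eq σ (bp a σ x) h1
  rw [tm, tm, hbx, h2]
  have : -(i + ex a σ x) = -i + -(ex a σ x) := by ring
  rw [this, zpow_add, Equiv.Perm.mul_apply]

lemma tm_bp (a : α) (σ : Equiv.Perm α) (x : α) : tm a σ (bp a σ x) = bp a σ x := by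
  have hbb : bp a σ (bp a σ x) = bp a σ x := (bp_congr a σ (bp_sameCycle a σ x)).symm
  have h0 : (σ ^ (ex a σ (bp a σ x))) (bp a σ (bp a σ x)) =
      (σ ^ (0 : ℤ)) (bp a σ (bp a σ x)) := by
    rw [ex_spec, hbb, zpow_zero]; rfl
  have h2 := zpow_neg_apply_eq σ (bp a σ (bp a σ x)) h0
  rw [tm, hbb] at *
  rw [h2]
  simp

lemma tm_invol (a : α) (σ : Equiv.Perm α) : Function.Involutive (tm a σ) := by
  intro x
  have h1 : tm a σ x = (σ ^ (-(ex a σ x))) (bp a σ x) := rfl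
  rw [h1, tm_key a σ (bp a σ x) (-(ex a σ x)), tm_bp, neg_neg, ex_spec]

lemma exists_conj_inv (a : α) (σ : Equiv.Perm α) :
    ∃ θ : Equiv.Perm α, θ a = a ∧ θ * σ * θ⁻¹ = σ⁻¹ := by
  refine ⟨(tm_invol a σ).toPerm (tm a σ), ?_, ?_⟩
  · show tm a σ a = a
    have h0 : (σ ^ (ex a σ a)) (bp a σ a) = (σ ^ (0 : ℤ)) (bp a σ a) := by
      rw [ex_spec, bp_a, zpow_zero]; rfl
    have h2 := zpow_neg_apply_eq σ (bp a σ a) h0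
    rw [tm, h2, bp_a]
    simp
  · have hsw : ∀ x, tm a σ (σ x) = σ⁻¹ (tm a σ x) := by
      intro x
      have := tm_key a σ x 1
      simpa [zpow_one] using this
    ext x
    simp only [Equiv.Perm.mul_apply]
    simp only [Equiv.Perm.inv_def, Function.Involutive.toPerm_symm,
      Function.Involutive.coe_toPerm]
    exact (hsw _).trans (congrArg _ (tm_invol a σ x))


open Submodule

variable {G : Type*} [Group G] {V : Type*} [AddCommGroup V] [Module ℂ V]

lemma rep_apply_apply (ρ : Representation ℂ G V) (a b : G) (v : V) :
    ρ a (ρ b v) = ρ (a * b) v := by rw [map_mul]; rfl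

lemma rep_inv_apply (ρ : Representation ℂ G V) (a : G) (v : V) :
    ρ a (ρ a⁻¹ v) = v := by rw [rep_apply_apply]; simp

lemma span_orbit_eq_top (ρ : Representation ℂ G V) (hρ : RepIsIrreducible ρ)
    {v₀ : V} (h0 : v₀ ≠ 0) :
    Submodule.span ℂ (Set.range fun g : G => ρ g v₀) = ⊤ := by
  set p := Submodule.span ℂ (Set.range fun g : G => ρ g v₀) with hp
  have hinv : ∀ (g : G) (v : V), v ∈ p → ρ g v ∈ p := by
    intro g v hv
    have : p.map (ρ g) ≤ p := by
      rw [hp, Submodule.map_span]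
      apply Submodule.span_le.mpr
      rintro _ ⟨_, ⟨g', rfl⟩, rfl⟩
      apply Submodule.subset_span
      exact ⟨g * g', by simpa using (rep_apply_apply ρ g g' v₀).symm⟩
    exact this ⟨v, hv, rfl⟩
  rcases hρ.2 p hinv with h | h
  · exfalso
    have : v₀ ∈ p := Submodule.subset_span ⟨1, by simp⟩
    rw [h] at this
    exact h0 (Submodule.mem_bot ℂ |>.mp this)
  · exact h

lemma fd_of_irreducible [Fintype G] (ρ : Representation ℂ G V)
    (hρ : RepIsIrreducible ρ) : FiniteDimensional ℂ V := by
  classical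
  obtain ⟨v₀, h0⟩ := hρ.1
  refine ⟨⟨Finset.image (fun g : G => ρ g v₀) Finset.univ, ?_⟩⟩
  rw [Finset.coe_image, Finset.coe_univ, Set.image_univ]
  exact span_orbit_eq_top ρ hρ h0

lemma schur [Fintype G] (ρ : Representation ℂ G V) (hρ : RepIsIrreducible ρ)
    (h : V →ₗ[ℂ] V) (hcomm : ∀ (g : G) (v : V), h (ρ g v) = ρ g (h v)) :
    ∃ c : ℂ, h = c • LinearMap.id := by
  haveI : FiniteDimensional ℂ V := fd_of_irreducible ρ hρ
  obtain ⟨v₀, h0⟩ := hρ.1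
  haveI : Nontrivial V := ⟨⟨v₀, 0, h0⟩⟩
  obtain ⟨c, hc⟩ := Module.End.exists_eigenvalue (h : Module.End ℂ V)
  obtain ⟨x, hx⟩ := hc.exists_hasEigenvector
  refine ⟨c, ?_⟩
  set p := LinearMap.ker (h - c • LinearMap.id) with hpdef
  have hmem : ∀ v, v ∈ p ↔ h v = c • v := by
    intro v
    simp [hpdef, LinearMap.mem_ker, sub_eq_zero]
  have hinv : ∀ (g : G) (v : V), v ∈ p → ρ g v ∈ p := by
    intro g v hv
    rw [hmem] at hv ⊢
    rw [hcomm g v, hv, map_smul]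
  rcases hρ.2 p hinv with hbot | htop
  · exfalso
    have : x ∈ p := (hmem x).mpr (Module.End.mem_eigenspace_iff.mp hx.1)
    rw [hbot] at this
    exact hx.2 (Submodule.mem_bot ℂ |>.mp this)
  · apply LinearMap.ext
    intro v
    have : v ∈ p := htop ▸ Submodule.mem_top
    rw [hmem] at this
    simpa using this

lemma exists_equivariant_proj [Fintype G] (ρ : Representation ℂ G V)
    (U : Submodule ℂ V) (hU : ∀ (g : G) (v : V), v ∈ U → ρ g v ∈ U) :
    ∃ π : V →ₗ[ℂ] V, (∀ (g : G) (v : V), π (ρ g v) = ρ g (π v)) ∧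
      (∀ v, π v ∈ U) ∧ (∀ u ∈ U, π u = u) := by
  obtain ⟨q, hq⟩ := Submodule.exists_isCompl U
  set π₀ : V →ₗ[ℂ] V := U.subtype ∘ₗ (U.projectionOnto q hq) with hπ₀
  have hπ₀U : ∀ v, π₀ v ∈ U := fun v => (U.projectionOnto q hq v).2
  have hπ₀id : ∀ u ∈ U, π₀ u = u := by
    intro u hu
    have := Submodule.linearProjOfIsCompl_apply_left hq ⟨u, hu⟩
    simp only [hπ₀, LinearMap.comp_apply, Submodule.coe_subtype]
    rw [this]
  have hcard : ((Fintype.card G : ℂ)) ≠ 0 := Nat.cast_ne_zero.mpr Fintype.card_ne_zero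
  set π : V →ₗ[ℂ] V :=
    (Fintype.card G : ℂ)⁻¹ • ∑ g : G, (ρ g ∘ₗ π₀ ∘ₗ ρ g⁻¹) with hπ
  have happ : ∀ v, π v = (Fintype.card G : ℂ)⁻¹ • ∑ g : G, ρ g (π₀ (ρ g⁻¹ v)) := by
    intro v
    rw [hπ]
    rw [LinearMap.smul_apply, LinearMap.sum_apply]
    rfl
  refine ⟨π, ?_, ?_, ?_⟩
  · intro g₀ v
    rw [happ, happ, map_smul, map_sum]
    congr 1
    refine (Fintype.sum_bijective (fun g => g₀ * g) (Group.mulLeft_bijective g₀)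
      _ _ ?_).symm
    intro g
    simp only [rep_apply_apply]
    congr 2
    group
  · intro v
    rw [happ]
    refine Submodule.smul_mem _ _ (Submodule.sum_mem _ ?_)
    intro g _
    exact hU g _ (hπ₀U _)
  · intro u hu
    rw [happ]
    have : ∀ g : G, ρ g (π₀ (ρ g⁻¹ u)) = u := by
      intro g
      rw [hπ₀id _ (hU g⁻¹ u hu), rep_inv_apply]
    rw [Finset.sum_congr rfl (fun g _ => this g), Finset.sum_const, Finset.card_univ,
      ← Nat.cast_smul_eq_nsmul ℂ, smul_smul, inv_mul_cancel₀ hcard, one_smul]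


section Phi

variable [Fintype G]

noncomputable def Phi (ρ : Representation ℂ G V) (f : G → ℂ) : V →ₗ[ℂ] V :=
  ∑ g : G, f g • (ρ g : V →ₗ[ℂ] V)

lemma Phi_apply (ρ : Representation ℂ G V) (f : G → ℂ) (v : V) :
    Phi ρ f v = ∑ g : G, f g • ρ g v := by
  rw [Phi, LinearMap.sum_apply]
  simp

noncomputable def conv (f₁ f₂ : G → ℂ) : G → ℂ := fun g => ∑ x : G, f₁ x * f₂ (x⁻¹ * g)

lemma Phi_comp (ρ : Representation ℂ G V) (f₁ f₂ : G → ℂ) :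
    Phi ρ f₁ ∘ₗ Phi ρ f₂ = Phi ρ (conv f₁ f₂) := by
  apply LinearMap.ext
  intro v
  rw [LinearMap.comp_apply, Phi_apply, Phi_apply, Phi_apply]
  simp only [map_sum, map_smul, Finset.smul_sum, smul_smul, rep_apply_apply, conv,
    Finset.sum_smul]
  conv_rhs => rw [Finset.sum_comm]
  apply Finset.sum_congr rfl
  intro x _
  refine Fintype.sum_bijective (fun y => x * y) (Group.mulLeft_bijective x) _ _ ?_
  intro y
  rw [inv_mul_cancel_left]

/-- Diagonal representation on `G → V`. -/
noncomputable def dRep (ρ : Representation ℂ G V) : Representation ℂ G (G → V) where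
  toFun g := LinearMap.pi fun i => (ρ g) ∘ₗ LinearMap.proj i
  map_one' := LinearMap.ext fun z => funext fun i =>
    show ρ 1 (z i) = z i by rw [map_one]; rfl
  map_mul' g h := LinearMap.ext fun z => funext fun i =>
    show ρ (g * h) (z i) = ρ g (ρ h (z i)) by rw [rep_apply_apply]

lemma dRep_apply (ρ : Representation ℂ G V) (g : G) (z : G → V) (i : G) :
    dRep ρ g z i = ρ g (z i) := rfl

lemma burnside [DecidableEq G] (ρ : Representation ℂ G V) (hρ : RepIsIrreducible ρ)
    (T : V →ₗ[ℂ] V) : ∃ f : G → ℂ, Phi ρ f = T := by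
  obtain ⟨v₀, h0⟩ := hρ.1
  set vf : G → V := fun g => ρ g v₀ with hvf
  have hspan : Submodule.span ℂ (Set.range vf) = ⊤ := span_orbit_eq_top ρ hρ h0
  set N : Submodule ℂ (G → V) :=
    Submodule.span ℂ (Set.range fun g : G => dRep ρ g vf) with hN
  have hNinv : ∀ (g : G) (z : G → V), z ∈ N → dRep ρ g z ∈ N := by
    intro g z hz
    have : N.map (dRep ρ g) ≤ N := by
      rw [hN, Submodule.map_span]
      apply Submodule.span_le.mpr
      rintro _ ⟨_, ⟨g', rfl⟩, rfl⟩
      apply Submodule.subset_span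
      refine ⟨g * g', funext fun i => ?_⟩
      show ρ (g * g') (ρ i v₀) = ρ g (ρ g' (ρ i v₀))
      rw [rep_apply_apply, rep_apply_apply, rep_apply_apply, mul_assoc]
    exact this ⟨z, hz, rfl⟩
  obtain ⟨π, hπc, hπN, hπid⟩ := exists_equivariant_proj (dRep ρ) N hNinv
  -- matrix entries of π are equivariant, hence scalars
  have hentry : ∀ i j : G, ∃ c : ℂ, ∀ v : V,
      π (Pi.single j v) i = c • v := by
    intro i j
    set eij : V →ₗ[ℂ] V :=
      (LinearMap.proj i) ∘ₗ π ∘ₗ (LinearMap.single ℂ (fun _ : G => V) j) with he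
    have heq : ∀ (g : G) (v : V), eij (ρ g v) = ρ g (eij v) := by
      intro g v
      have h1 : (Pi.single j (ρ g v) : G → V) = dRep ρ g (Pi.single j v) := by
        funext k
        rw [dRep_apply]
        by_cases hk : k = j
        · subst hk; simp
        · simp [Pi.single_eq_of_ne hk]
      simp only [he, LinearMap.comp_apply, LinearMap.proj_apply, LinearMap.single_apply]
      rw [h1, hπc, dRep_apply]
    obtain ⟨c, hc⟩ := schur ρ hρ eij heq
    refine ⟨c, fun v => ?_⟩
    have := congrArg (fun (F : V →ₗ[ℂ] V) => F v) hc
    simpa [he] using this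
  choose c hc using hentry
  have hπdecomp : ∀ (z : G → V) (i : G), π z i = ∑ j : G, c i j • z j := by
    intro z i
    conv_lhs => rw [← Finset.univ_sum_single z]
    rw [map_sum]
    rw [Finset.sum_apply]
    apply Finset.sum_congr rfl
    intro j _
    rw [hc]
  -- π commutes with componentwise T
  have hcommT : ∀ z : G → V, π (fun i => T (z i)) = fun i => T (π z i) := by
    intro z
    funext i
    rw [hπdecomp, hπdecomp]
    rw [map_sum]
    apply Finset.sum_congr rfl
    intro j _
    rw [map_smul]
  have hvfN : vf ∈ N := by
    apply Submodule.subset_span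
    exact ⟨1, by simp⟩
  have hπvf : π vf = vf := hπid vf hvfN
  set w : G → V := fun i => T (vf i) with hw
  have hwN : w ∈ N := by
    have : π w = w := by
      rw [hw, hcommT vf, hπvf]
    rw [← this]
    exact hπN w
  rw [hN] at hwN
  obtain ⟨f, hf⟩ := (mem_span_range_iff_exists_fun ℂ).mp hwN
  refine ⟨f, ?_⟩
  apply LinearMap.ext_on hspan
  rintro _ ⟨i, rfl⟩
  rw [Phi_apply]
  calc ∑ g : G, f g • ρ g (vf i) = (∑ g : G, f g • dRep ρ g vf) i := by
        rw [Finset.sum_apply]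
        apply Finset.sum_congr rfl
        intro g _
        rw [Pi.smul_apply, dRep_apply]
  _ = w i := by rw [hf]
  _ = T (vf i) := rfl

lemma conv_conjInv {H : Subgroup G} {f₁ f₂ : G → ℂ}
    (h₁ : ∀ h ∈ H, ∀ g, f₁ (h * g * h⁻¹) = f₁ g)
    (h₂ : ∀ h ∈ H, ∀ g, f₂ (h * g * h⁻¹) = f₂ g) :
    ∀ h ∈ H, ∀ g, conv f₁ f₂ (h * g * h⁻¹) = conv f₁ f₂ g := by
  intro h hh g
  show (∑ x : G, f₁ x * f₂ (x⁻¹ * (h * g * h⁻¹))) = ∑ x : G, f₁ x * f₂ (x⁻¹ * g)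
  refine (Fintype.sum_bijective (fun x => h * x * h⁻¹)
    ((MulAut.conj h).bijective) _ _ ?_).symm
  intro x
  rw [h₁ h hh x]
  congr 1
  have : (h * x * h⁻¹)⁻¹ * (h * g * h⁻¹) = h * (x⁻¹ * g) * h⁻¹ := by group
  rw [this, h₂ h hh]

lemma inv_invariant {H : Subgroup G}
    (hconj : ∀ g : G, ∃ h ∈ H, h * g * h⁻¹ = g⁻¹)
    {f : G → ℂ} (hf : ∀ h ∈ H, ∀ g, f (h * g * h⁻¹) = f g) :
    ∀ g, f g⁻¹ = f g := by
  intro g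
  obtain ⟨h, hh, he⟩ := hconj g
  rw [← he, hf h hh]

lemma conv_comm {H : Subgroup G}
    (hconj : ∀ g : G, ∃ h ∈ H, h * g * h⁻¹ = g⁻¹)
    {f₁ f₂ : G → ℂ}
    (h₁ : ∀ h ∈ H, ∀ g, f₁ (h * g * h⁻¹) = f₁ g)
    (h₂ : ∀ h ∈ H, ∀ g, f₂ (h * g * h⁻¹) = f₂ g) :
    conv f₁ f₂ = conv f₂ f₁ := by
  funext g
  have hc : ∀ g, conv f₂ f₁ g⁻¹ = conv f₂ f₁ g :=
    inv_invariant hconj (conv_conjInv h₂ h₁)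
  rw [← hc g]
  show (∑ x : G, f₁ x * f₂ (x⁻¹ * g)) = ∑ x : G, f₂ x * f₁ (x⁻¹ * g⁻¹)
  refine Fintype.sum_bijective (fun c => g⁻¹ * c) (Group.mulLeft_bijective g⁻¹) _ _ ?_
  intro x
  show f₁ x * f₂ (x⁻¹ * g) = f₂ (g⁻¹ * x) * f₁ ((g⁻¹ * x)⁻¹ * g⁻¹)
  have e1 : (g⁻¹ * x)⁻¹ * g⁻¹ = x⁻¹ := by group
  rw [e1, inv_invariant hconj h₁ x, mul_comm]
  congr 1
  have e2 : x⁻¹ * g = (g⁻¹ * x)⁻¹ := by group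
  rw [e2, inv_invariant hconj h₂]

/-- The Gelfand trick: two `H`-equivariant endomorphisms of an irreducible `G`-rep
commute, provided every element of `G` is conjugate to its inverse by an element of
`H`. -/
lemma equivariant_comm [DecidableEq G] (ρ : Representation ℂ G V)
    (hρ : RepIsIrreducible ρ) {H : Subgroup G}
    (hconj : ∀ g : G, ∃ h ∈ H, h * g * h⁻¹ = g⁻¹)
    (T S : V →ₗ[ℂ] V)
    (hT : ∀ h ∈ H, ∀ v, T (ρ h v) = ρ h (T v))
    (hS : ∀ h ∈ H, ∀ v, S (ρ h v) = ρ h (S v)) :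
    T ∘ₗ S = S ∘ₗ T := by
  haveI : Fintype H := Fintype.ofFinite H
  have hcard : ((Fintype.card H : ℂ)) ≠ 0 := Nat.cast_ne_zero.mpr Fintype.card_ne_zero
  -- averaging: any H-equivariant endomorphism is Phi of an H-conjugation invariant fn
  have key : ∀ (T : V →ₗ[ℂ] V), (∀ h ∈ H, ∀ v, T (ρ h v) = ρ h (T v)) →
      ∃ f : G → ℂ, (∀ h ∈ H, ∀ g, f (h * g * h⁻¹) = f g) ∧ Phi ρ f = T := by
    intro T hT
    obtain ⟨f₀, hf₀⟩ := burnside ρ hρ T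
    set f : G → ℂ := fun g =>
      (Fintype.card H : ℂ)⁻¹ * ∑ h : H, f₀ ((h : G)⁻¹ * g * (h : G)) with hf
    refine ⟨f, ?_, ?_⟩
    · intro h₀ hh₀ g
      simp only [hf]
      congr 1
      refine Fintype.sum_bijective (fun h : H => (⟨h₀, hh₀⟩ : H)⁻¹ * h)
        (Group.mulLeft_bijective _) _ _ ?_
      intro h
      congr 1
      push_cast
      group
    · apply LinearMap.ext
      intro v
      rw [Phi_apply]
      have step1 : ∑ g : G, f g • ρ g v =
          (Fintype.card H : ℂ)⁻¹ • ∑ h : H, ∑ g : G, f₀ ((h : G)⁻¹ * g * (h : G)) • ρ g v := by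
        simp only [hf, mul_smul, Finset.sum_smul, Finset.smul_sum]
        rw [Finset.sum_comm]
      have step2 : ∀ h : H, ∑ g : G, f₀ ((h : G)⁻¹ * g * (h : G)) • ρ g v = T v := by
        intro h
        have : ∑ g : G, f₀ ((h : G)⁻¹ * g * (h : G)) • ρ g v
            = ρ (h : G) (Phi ρ f₀ (ρ (h : G)⁻¹ v)) := by
          rw [Phi_apply, map_sum]
          have hbij : Function.Bijective (fun g : G => (h : G)⁻¹ * g * (h : G)) := by
            refine Function.bijective_iff_has_inverse.mpr
              ⟨fun g => (h : G) * g * (h : G)⁻¹, fun g => by group, fun g => by group⟩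
          refine Fintype.sum_bijective (fun g => (h : G)⁻¹ * g * (h : G)) hbij _ _ ?_
          intro g
          show f₀ ((h : G)⁻¹ * g * (h : G)) • ρ g v =
            ρ (h : G) (f₀ ((h : G)⁻¹ * g * (h : G)) •
              ρ ((h : G)⁻¹ * g * (h : G)) (ρ ((h : G))⁻¹ v))
          rw [map_smul]
          congr 1
          rw [rep_apply_apply, rep_apply_apply]
          congr 1
          group
        rw [this, hf₀, ← hT (h : G) h.2, rep_inv_apply]
      rw [step1, Finset.sum_congr rfl (fun h _ => step2 h), Finset.sum_const,
        Finset.card_univ, ← Nat.cast_smul_eq_nsmul ℂ, smul_smul,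
        inv_mul_cancel₀ hcard, one_smul]
  obtain ⟨fT, hfTi, hfT⟩ := key T hT
  obtain ⟨fS, hfSi, hfS⟩ := key S hS
  rw [← hfT, ← hfS, Phi_comp, Phi_comp, conv_comm hconj hfTi hfSi]

end Phi

end MF

/-- Restriction from `S_n` to `S_{n-1}` is multiplicity-free:  for every irreducible
complex representation `(V, ρ)` of `S_n` (realized here as `Equiv.Perm (Fin (n+1))`) and
every irreducible representation `(W, τ)` of the subgroup `S_{n-1}` (the stabilizer of
the last point), the space of `S_{n-1}`-equivariant maps `W → V` has dimension at most
one; equivalently, every irreducible `ℂ[S_{n-1}]`-module occurs in the restriction of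
`V` with multiplicity at most one. -/
theorem restriction_multiplicity_free (n : ℕ)
    (V : Type*) [AddCommGroup V] [Module ℂ V]
    (ρ : Representation ℂ (Equiv.Perm (Fin (n + 1))) V) (hρ : RepIsIrreducible ρ)
    (W : Type*) [AddCommGroup W] [Module ℂ W]
    (τ : Representation ℂ (pointStabilizer n) W) (hτ : RepIsIrreducible τ) :
    Module.rank ℂ (equivariantHoms (pointStabilizer n) ρ τ) ≤ 1 := by
  classical
  haveI : Fintype (pointStabilizer n) := Fintype.ofFinite _
  have hconj : ∀ g : Equiv.Perm (Fin (n + 1)),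
      ∃ h ∈ pointStabilizer n, h * g * h⁻¹ = g⁻¹ := by
    intro σ
    obtain ⟨θ, h1, h2⟩ := MF.exists_conj_inv (Fin.last n) σ
    refine ⟨θ, ?_, h2⟩
    rw [pointStabilizer, MulAction.mem_stabilizer_iff, Equiv.Perm.smul_def, h1]
  have main : ∀ f ∈ equivariantHoms (pointStabilizer n) ρ τ, f ≠ 0 →
      ∀ g ∈ equivariantHoms (pointStabilizer n) ρ τ, ∃ c : ℂ, g = c • f := by
    intro f hf hf0 g hg
    have hfe : ∀ (σ : pointStabilizer n) (w : W),
        f (τ σ w) = ρ (σ : Equiv.Perm (Fin (n + 1))) (f w) := mem_equivariantHoms.mp hf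
    have hge : ∀ (σ : pointStabilizer n) (w : W),
        g (τ σ w) = ρ (σ : Equiv.Perm (Fin (n + 1))) (g w) := mem_equivariantHoms.mp hg
    have hker : LinearMap.ker f = ⊥ := by
      have hinv : ∀ (σ : pointStabilizer n) (w : W),
          w ∈ LinearMap.ker f → τ σ w ∈ LinearMap.ker f := by
        intro σ w hw
        rw [LinearMap.mem_ker] at hw ⊢
        rw [hfe σ w, hw, map_zero]
      rcases hτ.2 (LinearMap.ker f) hinv with h | h
      · exact h
      · exfalso
        apply hf0
        apply LinearMap.ext
        intro w
        have : w ∈ LinearMap.ker f := h ▸ Submodule.mem_top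
        simpa using this
    have finj : Function.Injective f := LinearMap.ker_eq_bot.mp hker
    have hUinv : ∀ (σ : pointStabilizer n) (v : V), v ∈ LinearMap.range f →
        (ρ.comp (pointStabilizer n).subtype) σ v ∈ LinearMap.range f := by
      rintro σ v ⟨w, rfl⟩
      refine ⟨τ σ w, ?_⟩
      show f (τ σ w) = ρ (σ : Equiv.Perm (Fin (n + 1))) (f w)
      exact hfe σ w
    obtain ⟨π, hπc, hπU, hπid⟩ :=
      MF.exists_equivariant_proj (ρ.comp (pointStabilizer n).subtype) (LinearMap.range f) hUinv
    have hπc' : ∀ (σ : pointStabilizer n) (v : V),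
        π (ρ (σ : Equiv.Perm (Fin (n + 1))) v) = ρ (σ : Equiv.Perm (Fin (n + 1))) (π v) :=
      fun σ v => hπc σ v
    have hksub : ∀ u : LinearMap.range f,
        f ((LinearEquiv.ofInjective f finj).symm u) = (u : V) := by
      intro u
      conv_rhs => rw [← (LinearEquiv.ofInjective f finj).apply_symm_apply u]
      rw [LinearEquiv.ofInjective_apply]
    set k : V →ₗ[ℂ] W :=
      ((LinearEquiv.ofInjective f finj).symm : LinearMap.range f →ₗ[ℂ] W) ∘ₗ
        (π.codRestrict (LinearMap.range f) hπU) with hk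
    have hfk : ∀ v, f (k v) = π v := by
      intro v
      exact hksub ⟨π v, hπU v⟩
    have hkf : ∀ w, k (f w) = w := by
      intro w
      apply finj
      rw [hfk]
      exact hπid _ ⟨w, rfl⟩
    have hgk : ∀ (σ : Equiv.Perm (Fin (n + 1))), σ ∈ pointStabilizer n →
        ∀ v, (g ∘ₗ k) (ρ σ v) = ρ σ ((g ∘ₗ k) v) := by
      intro σ hσ v
      have h1 : k (ρ σ v) = τ ⟨σ, hσ⟩ (k v) := by
        apply finj
        rw [hfk, hfe ⟨σ, hσ⟩ (k v), hfk]
        exact hπc' ⟨σ, hσ⟩ v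
      show g (k (ρ σ v)) = ρ σ (g (k v))
      rw [h1, hge ⟨σ, hσ⟩ (k v)]
    have hπH : ∀ (σ : Equiv.Perm (Fin (n + 1))), σ ∈ pointStabilizer n →
        ∀ v, π (ρ σ v) = ρ σ (π v) := by
      intro σ hσ v
      exact hπc' ⟨σ, hσ⟩ v
    have hcomm : π ∘ₗ (g ∘ₗ k) = (g ∘ₗ k) ∘ₗ π :=
      MF.equivariant_comm ρ hρ hconj π (g ∘ₗ k) hπH hgk
    have hgU : ∀ w : W, g w ∈ LinearMap.range f := by
      intro w
      have h3 : π (g (k (f w))) = g (k (π (f w))) :=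
        congrArg (fun (F : V →ₗ[ℂ] V) => F (f w)) hcomm
      rw [hkf] at h3
      have h6 : π (f w) = f w := hπid _ ⟨w, rfl⟩
      rw [h6, hkf] at h3
      rw [← h3]
      exact hπU _
    set gr : W →ₗ[ℂ] W :=
      ((LinearEquiv.ofInjective f finj).symm : LinearMap.range f →ₗ[ℂ] W) ∘ₗ
        (g.codRestrict (LinearMap.range f) hgU) with hgr
    have hfgr : ∀ w, f (gr w) = g w := by
      intro w
      exact hksub ⟨g w, hgU w⟩
    have hgre : ∀ (σ : pointStabilizer n) (w : W), gr (τ σ w) = τ σ (gr w) := by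
      intro σ w
      apply finj
      rw [hfgr, hfe σ (gr w), hfgr, hge σ w]
    obtain ⟨c, hc⟩ := MF.schur τ hτ gr hgre
    refine ⟨c, ?_⟩
    apply LinearMap.ext
    intro w
    have h5 : gr w = c • w := by rw [hc]; rfl
    calc g w = f (gr w) := (hfgr w).symm
    _ = f (c • w) := by rw [h5]
    _ = c • f w := map_smul f c w
  by_cases hE0 : ∀ x ∈ equivariantHoms (pointStabilizer n) ρ τ, x = (0 : W →ₗ[ℂ] V)
  · have hbot : equivariantHoms (pointStabilizer n) ρ τ = ⊥ :=
      (Submodule.eq_bot_iff _).mpr hE0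
    rw [hbot]
    simp
  · push_neg at hE0
    obtain ⟨f, hfE, hf0⟩ := hE0
    have hle : equivariantHoms (pointStabilizer n) ρ τ ≤ ℂ ∙ f := by
      intro g hg
      obtain ⟨c, hc⟩ := main f hfE hf0 g hg
      exact Submodule.mem_span_singleton.mpr ⟨c, hc.symm⟩
    calc Module.rank ℂ (equivariantHoms (pointStabilizer n) ρ τ)
        ≤ Module.rank ℂ (ℂ ∙ f) := Submodule.rank_mono hle
    _ ≤ Cardinal.mk ({f} : Set (W →ₗ[ℂ] V)) := rank_span_le _
    _ ≤ 1 := by simp
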